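/- Let x ∈ ℝ^N with x ≥ 0 and x ≠ 0, and let r ≥ 1 be an integer. There exists a deterministic r-round adaptive procedure making at most ⌈N^{1/r}⌉ − 1 OR-queries per round (each query asks whether a given subset S ⊆ [N] intersects supp(x)) that outputs an index j with x_j > 0. -/
import Mathlib


open scoped Classical

/-- An `r`-round deterministic OR-query algorithm on vectors indexed by `Fin N`:
in each round it makes a batch of OR-queries (a list of subsets), and the next
round depends on the vector of Boolean answers; after `r` rounds it outputs an
index. -/
inductive ORAlg (N : ℕ) : ℕ → Type
  | leaf (j : Fin N) : ORAlg N 0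
  | node {r : ℕ} (qs : List (Finset (Fin N)))
      (next : (Fin qs.length → Bool) → ORAlg N r) : ORAlg N (r + 1)

/-- Answer of the OR-query `S` on the vector `x`: does `S` meet `supp(x)`? -/
noncomputable def orAnswer {N : ℕ} (x : Fin N → ℝ) (S : Finset (Fin N)) : Bool :=
  if ∃ j ∈ S, x j ≠ 0 then true else false

/-- Running an algorithm on input vector `x`. -/
noncomputable def orRun {N : ℕ} : {r : ℕ} → ORAlg N r → (Fin N → ℝ) → Fin N
  | _, .leaf j, _ => j
  | _, .node qs next, x => orRun (next (fun i => orAnswer x (qs.get i))) x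

/-- The maximum number of queries made in any single round. -/
noncomputable def orWidth {N : ℕ} : {r : ℕ} → ORAlg N r → ℕ
  | _, .leaf _ => 0
  | _, .node qs next =>
      max qs.length (Finset.univ.sup fun b : Fin qs.length → Bool => orWidth (next b))

noncomputable def build (N k : ℕ) (j0 : Fin N) : (r : ℕ) → List (Fin N) → ORAlg N r
  | 0, C => .leaf (C.headD j0)
  | r + 1, C =>
      .node ((List.range (k - 1)).map fun i => ((C.drop (i * k ^ r)).take (k ^ r)).toFinset)
        (fun b =>
          if h : ∃ i, b i = true then
            build N k j0 r ((C.drop (h.choose.val * k ^ r)).take (k ^ r))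
          else
            build N k j0 r (C.drop ((k - 1) * k ^ r)))

lemma width_build (N k : ℕ) (j0 : Fin N) :
    ∀ (r : ℕ) (C : List (Fin N)), orWidth (build N k j0 r C) ≤ k - 1 := by
  intro r
  induction r with
  | zero => intro C; simp [build, orWidth]
  | succ r ih =>
    intro C
    rw [build, orWidth]
    apply max_le
    · simp
    · apply Finset.sup_le
      intro b _
      by_cases h : ∃ i, b i = true
      · simp only [h, dif_pos]; exact ih _
      · simp only [h, dif_neg, not_false_iff]; exact ih _

lemma mem_take_blocks {α : Type*} (m : ℕ) :
    ∀ (n : ℕ) (C : List α) (j : α), j ∈ C.take (n * m) →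
      ∃ i < n, j ∈ (C.drop (i * m)).take m := by
  intro n
  induction n with
  | zero => simp
  | succ n ih =>
    intro C j hj
    rw [Nat.succ_mul, List.take_add] at hj
    rcases List.mem_append.1 hj with h | h
    · obtain ⟨i, hi, h⟩ := ih C j h
      exact ⟨i, Nat.lt_succ_of_lt hi, h⟩
    · exact ⟨n, Nat.lt_succ_self n, h⟩

lemma orAnswer_eq_true {N : ℕ} (x : Fin N → ℝ) (S : Finset (Fin N)) :
    orAnswer x S = true ↔ ∃ j ∈ S, x j ≠ 0 := by
  rw [orAnswer]
  split_ifs with h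
  · simpa using h
  · simpa using h

lemma run_build (N k : ℕ) (hk : 1 ≤ k) (j0 : Fin N) (x : Fin N → ℝ) :
    ∀ (r : ℕ) (C : List (Fin N)), C.length ≤ k ^ r → (∃ j ∈ C, x j ≠ 0) →
      x (orRun (build N k j0 r C) x) ≠ 0 := by
  intro r
  induction r with
  | zero =>
    intro C hlen ⟨j, hj, hx⟩
    match C, hj with
    | [a], hj =>
      simp only [List.mem_singleton] at hj
      subst hj
      simpa [build, orRun] using hx
    | a :: b :: t, _ => simp at hlen
  | succ r ih =>
    intro C hlen hex
    rw [build, orRun]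
    set m := k ^ r with hm
    set qs := (List.range (k - 1)).map
        (fun i => ((C.drop (i * m)).take m).toFinset) with hqs
    have hqlen : qs.length = k - 1 := by simp [hqs]
    have hget : ∀ (i : Fin qs.length),
        qs.get i = ((C.drop (i.val * m)).take m).toFinset := by
      intro i
      simp [hqs, List.get_eq_getElem]
    by_cases h : ∃ i : Fin qs.length, orAnswer x (qs.get i) = true
    · simp only [h, dif_pos]
      apply ih
      · exact List.length_take_le _ _
      · have hc := h.choose_spec
        rw [hget, orAnswer_eq_true] at hc
        obtain ⟨j, hj, hx⟩ := hc
        exact ⟨j, List.mem_toFinset.1 hj, hx⟩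
    · simp only [h, dif_neg, not_false_iff]
      obtain ⟨j, hj, hx⟩ := hex
      apply ih
      · have h1 : (k - 1) * m = k * m - m := Nat.sub_one_mul _ _
        have h3 : m ≤ k * m := Nat.le_mul_of_pos_left m (by omega)
        have h2 : C.length ≤ k * m := by
          rw [pow_succ] at hlen
          calc C.length ≤ m * k := hlen
          _ = k * m := Nat.mul_comm _ _
        simp only [List.length_drop]
        omega
      · refine ⟨j, ?_, hx⟩
        have hsplit : j ∈ C.take ((k - 1) * m) ++ C.drop ((k - 1) * m) := by
          rwa [List.take_append_drop]
        rcases List.mem_append.1 hsplit with h' | h'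
        · exfalso
          obtain ⟨i, hi, hmem⟩ := mem_take_blocks m (k - 1) C j h'
          apply h
          refine ⟨⟨i, by omega⟩, ?_⟩
          rw [hget, orAnswer_eq_true]
          exact ⟨j, List.mem_toFinset.2 hmem, hx⟩
        · exact h'

/-- there is a deterministic `r`-round OR-query algorithm making at
most `⌈N^{1/r}⌉ - 1` queries per round which, on any nonzero nonnegative input
`x`, outputs an index `j` with `x j > 0`. -/
theorem stmt3 (N r : ℕ) (hN : 1 ≤ N) (hr : 1 ≤ r) :
    ∃ T : ORAlg N r, orWidth T ≤ ⌈(N : ℝ) ^ ((1 : ℝ) / r)⌉₊ - 1 ∧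
      ∀ x : Fin N → ℝ, (∀ j, 0 ≤ x j) → x ≠ 0 → 0 < x (orRun T x) := by
  set k := ⌈(N : ℝ) ^ ((1 : ℝ) / r)⌉₊ with hkdef
  have hrR : (r : ℝ) ≠ 0 := by positivity
  have hNk : (N : ℝ) ^ ((1 : ℝ) / r) ≥ 1 := by
    apply Real.one_le_rpow
    · exact_mod_cast hN
    · positivity
  have hk : 1 ≤ k := by
    rw [hkdef]
    exact Nat.one_le_ceil_iff.2 (lt_of_lt_of_le zero_lt_one hNk)
  have hNle : N ≤ k ^ r := by
    have h1 : (N : ℝ) ≤ (k : ℝ) ^ r := by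
      calc (N : ℝ) = ((N : ℝ) ^ ((1 : ℝ) / r)) ^ (r : ℕ) := by
            rw [← Real.rpow_natCast ((N : ℝ) ^ ((1 : ℝ) / r)) r,
              ← Real.rpow_mul (by positivity), one_div,
              inv_mul_cancel₀ hrR, Real.rpow_one]
        _ ≤ (k : ℝ) ^ r := by
            apply pow_le_pow_left₀ (by positivity)
            exact Nat.le_ceil _
    exact_mod_cast h1
  refine ⟨build N k ⟨0, hN⟩ r (List.finRange N), ?_, ?_⟩
  · exact width_build N k _ r _
  · intro x hpos hx0
    have hne : ∃ j, x j ≠ 0 := Function.ne_iff.1 hx0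
    obtain ⟨j, hj⟩ := hne
    have := run_build N k hk ⟨0, hN⟩ x r (List.finRange N)
      (by simpa using hNle) ⟨j, List.mem_finRange j, hj⟩
    exact lt_of_le_of_ne (hpos _) (Ne.symm this)
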